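/- arXiv:0902.3078 — 3 statements merged into one kernel-verified Lean document; each statement's English description precedes it below -/
import Mathlib

section
/- Let x : (0, ∞) → [0, ∞) be a decreasing, right-continuous, integrable function with ∫₀^∞ x = 1, ν_x the measure with density x, and λ Lebesgue measure on (0, ∞). For a measurable function f on (0, ∞), let μ̃_t(f, m) = inf{‖f·χ_E‖_∞ : m(Eᶜ) ≤ t} denote the decreasing rearrangement with respect to the measure m. Then for every t > 0, μ̃_t(f, λ) ≥ μ̃_{F(t)}(f, ν_x), where F(t) = ∫₀^t x(s) ds. -/
open MeasureTheory
open scoped ENNReal NNReal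

/-- Decreasing rearrangement with respect to a measure `m`:
`μ̃_t(f, m) = inf {‖f·χ_E‖_∞ : m(Eᶜ) ≤ t}`. -/
noncomputable def rearr (m : MeasureTheory.Measure ℝ) (f : ℝ → ℝ≥0∞) (t : ℝ≥0∞) : ℝ≥0∞ :=
  ⨅ (E : Set ℝ) (_ : MeasurableSet E) (_ : m Eᶜ ≤ t), essSup (E.indicator f) m

private lemma key_lemma (x : ℝ → ℝ) (hdec : AntitoneOn x (Set.Ioi 0)) (t : ℝ) (ht : 0 < t)
    (A : Set ℝ) (hA : MeasurableSet A)
    (hle : volume (A ∩ Set.Ioi 0) ≤ ENNReal.ofReal t) :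
    ∫⁻ s in A ∩ Set.Ioi 0, ENNReal.ofReal (x s) ≤
      ∫⁻ s in Set.Ioc (0:ℝ) t, ENNReal.ofReal (x s) := by
  set g : ℝ → ℝ≥0∞ := fun s => ENNReal.ofReal (x s) with hg
  set A' : Set ℝ := A ∩ Set.Ioi 0 with hA'
  have hA'm : MeasurableSet A' := hA.inter measurableSet_Ioi
  have hsplit : A' = (A' ∩ Set.Ioc 0 t) ∪ (A' ∩ Set.Ioi t) := by
    rw [← Set.inter_union_distrib_left]
    ext s; simp only [Set.mem_inter_iff, Set.mem_union, Set.mem_Ioc, Set.mem_Ioi, hA']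
    constructor
    · rintro ⟨hs, hs0⟩; exact ⟨⟨hs, hs0⟩, by rcases le_or_gt s t with h | h; exact Or.inl ⟨hs0, h⟩; exact Or.inr h⟩
    · rintro ⟨hs, _⟩; exact hs
  have hdisj : Disjoint (A' ∩ Set.Ioc 0 t) (A' ∩ Set.Ioi t) := by
    apply Set.disjoint_left.2; rintro s ⟨_, hs1⟩ ⟨_, hs2⟩
    exact absurd hs1.2 (not_le.2 (Set.mem_Ioi.1 hs2))
  have hmeas2 : MeasurableSet (A' ∩ Set.Ioi t) := hA'm.inter measurableSet_Ioi
  have hvol1 : volume (A' ∩ Set.Ioc 0 t) ≤ ENNReal.ofReal t := by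
    calc volume (A' ∩ Set.Ioc 0 t) ≤ volume (Set.Ioc (0:ℝ) t) := measure_mono Set.inter_subset_right
    _ = ENNReal.ofReal t := by rw [Real.volume_Ioc, sub_zero]
  have hvol1' : volume (A' ∩ Set.Ioc 0 t) ≠ ⊤ := ne_top_of_le_ne_top ENNReal.ofReal_ne_top hvol1
  have hcancel : volume (A' ∩ Set.Ioi t) ≤ volume (Set.Ioc 0 t \ A') := by
    have h1 : volume (A' ∩ Set.Ioc 0 t) + volume (A' ∩ Set.Ioi t) ≤
        volume (A' ∩ Set.Ioc 0 t) + volume (Set.Ioc 0 t \ A') := by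
      calc volume (A' ∩ Set.Ioc 0 t) + volume (A' ∩ Set.Ioi t)
          = volume A' := by rw [← measure_union hdisj hmeas2, ← hsplit]
        _ ≤ ENNReal.ofReal t := hle
        _ = volume (Set.Ioc (0:ℝ) t) := by rw [Real.volume_Ioc, sub_zero]
        _ = volume (A' ∩ Set.Ioc 0 t) + volume (Set.Ioc 0 t \ A') := by
            rw [Set.inter_comm, ← measure_inter_add_diff _ hA'm]
    exact (ENNReal.add_le_add_iff_left hvol1').1 h1
  have hub : ∫⁻ s in A' ∩ Set.Ioi t, g s ≤ g t * volume (A' ∩ Set.Ioi t) := by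
    calc ∫⁻ s in A' ∩ Set.Ioi t, g s ≤ ∫⁻ _ in A' ∩ Set.Ioi t, g t := by
          apply setLIntegral_mono' hmeas2
          intro s hs
          exact ENNReal.ofReal_le_ofReal (hdec (Set.mem_Ioi.2 ht) (Set.mem_Ioi.2 (ht.trans hs.2)) (le_of_lt hs.2))
      _ = g t * volume (A' ∩ Set.Ioi t) := by rw [setLIntegral_const]
  have hlb : g t * volume (Set.Ioc 0 t \ A') ≤ ∫⁻ s in Set.Ioc 0 t \ A', g s := by
    calc g t * volume (Set.Ioc 0 t \ A') = ∫⁻ _ in Set.Ioc 0 t \ A', g t := by rw [setLIntegral_const]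
      _ ≤ ∫⁻ s in Set.Ioc 0 t \ A', g s := by
          apply setLIntegral_mono' (measurableSet_Ioc.diff hA'm)
          intro s hs
          exact ENNReal.ofReal_le_ofReal (hdec (Set.mem_Ioi.2 hs.1.1) (Set.mem_Ioi.2 ht) hs.1.2)
  have step : ∫⁻ s in A' ∩ Set.Ioi t, g s ≤ ∫⁻ s in Set.Ioc 0 t \ A', g s :=
    hub.trans ((mul_le_mul_right hcancel (g t)).trans hlb)
  calc ∫⁻ s in A', g s = (∫⁻ s in A' ∩ Set.Ioc 0 t, g s) + ∫⁻ s in A' ∩ Set.Ioi t, g s := by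
        conv_lhs => rw [hsplit]
        exact lintegral_union hmeas2 hdisj
    _ ≤ (∫⁻ s in A' ∩ Set.Ioc 0 t, g s) + ∫⁻ s in Set.Ioc 0 t \ A', g s := add_le_add_right step _
    _ = ∫⁻ s in (A' ∩ Set.Ioc 0 t) ∪ (Set.Ioc 0 t \ A'), g s := by
        rw [lintegral_union (measurableSet_Ioc.diff hA'm)]
        exact Set.disjoint_left.2 (fun s hs1 hs2 => hs2.2 hs1.1)
    _ = ∫⁻ s in Set.Ioc (0:ℝ) t, g s := by rw [Set.inter_comm, Set.inter_union_diff]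

/-- For decreasing, right-continuous, integrable x ≥ 0 with ∫₀^∞ x = 1, and any
measurable f, the Lebesgue rearrangement dominates: μ̃_t(f, λ) ≥ μ̃_{F(t)}(f, ν_x). -/
theorem rearrangement_comparison (x : ℝ → ℝ)
    (hpos : ∀ t : ℝ, 0 < t → 0 ≤ x t)
    (hdec : AntitoneOn x (Set.Ioi 0))
    (hrc : ∀ t : ℝ, 0 < t → ContinuousWithinAt x (Set.Ici t) t)
    (hint : MeasureTheory.IntegrableOn x (Set.Ioi 0))
    (hone : ∫ t in Set.Ioi (0:ℝ), x t = 1)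
    (f : ℝ → ℝ≥0∞) (hf : Measurable f) :
    ∀ t : ℝ, 0 < t →
      rearr ((MeasureTheory.volume.restrict (Set.Ioi (0:ℝ))).withDensity
          (fun s => ENNReal.ofReal (x s))) f
        (ENNReal.ofReal (∫ s in Set.Ioc (0:ℝ) t, x s)) ≤
      rearr (MeasureTheory.volume.restrict (Set.Ioi (0:ℝ))) f (ENNReal.ofReal t) := by
  intro t ht
  set μ := MeasureTheory.volume.restrict (Set.Ioi (0:ℝ)) with hμ
  set ν := μ.withDensity (fun s => ENNReal.ofReal (x s)) with hν
  have hF : ENNReal.ofReal (∫ s in Set.Ioc (0:ℝ) t, x s) =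
      ∫⁻ s in Set.Ioc (0:ℝ) t, ENNReal.ofReal (x s) := by
    apply MeasureTheory.ofReal_integral_eq_lintegral_ofReal
    · exact hint.mono_set Set.Ioc_subset_Ioi_self
    · exact (ae_restrict_iff' measurableSet_Ioc).2 (ae_of_all _ fun s hs => hpos s hs.1)
  rw [rearr, rearr]
  apply le_iInf; intro E
  apply le_iInf; intro hE
  apply le_iInf; intro hEt
  -- E is a competitor for ν as well
  have hνE : ν Eᶜ ≤ ENNReal.ofReal (∫ s in Set.Ioc (0:ℝ) t, x s) := by
    rw [hF, hν, withDensity_apply _ hE.compl, hμ, Measure.restrict_restrict hE.compl]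
    apply key_lemma x hdec t ht Eᶜ hE.compl
    rw [← Measure.restrict_apply hE.compl]
    exact hEt
  calc (⨅ (E' : Set ℝ) (_ : MeasurableSet E') (_ : ν E'ᶜ ≤
          ENNReal.ofReal (∫ s in Set.Ioc (0:ℝ) t, x s)), essSup (E'.indicator f) ν)
      ≤ essSup (E.indicator f) ν := by
        exact iInf_le_of_le E (iInf_le_of_le hE (iInf_le _ hνE))
    _ ≤ essSup (E.indicator f) μ :=
        essSup_mono_measure (withDensity_absolutelyContinuous _ _)
end

section
/- Let x : (0, ∞) → [0, ∞) be decreasing, right-continuous, integrable with ∫₀^∞ x = 1 and t_x = inf{t : x(t) = 0}, and let h : [0, ∞) → [0, ∞] be decreasing, right-continuous, and finite on (0, ∞). Then for all 0 < t < t_x, h(t) = μ̃_t(h, λ) = μ̃_{F(t)}(h, ν_x), where F(t) = ∫₀^t x(s) ds, λ is Lebesgue measure, ν_x has density x, and μ̃_t(h, m) = inf{‖h·χ_E‖_∞ : m(Eᶜ) ≤ t}. -/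
open MeasureTheory
open scoped ENNReal NNReal

lemma aux_ub (m : Measure ℝ) (h : ℝ → ℝ≥0∞) (hhdec : AntitoneOn h (Set.Ici 0))
    (t : ℝ) (ht : 0 < t) (c : ℝ≥0∞) (hm : m (Set.Ioi t)ᶜ ≤ c) :
    rearr m h c ≤ h t := by
  refine iInf_le_of_le (Set.Ioi t) (iInf_le_of_le measurableSet_Ioi (iInf_le_of_le hm ?_))
  refine essSup_le_of_ae_le _ (Filter.Eventually.of_forall fun s => ?_)
  by_cases hs : s ∈ Set.Ioi t
  · rw [Set.indicator_of_mem hs]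
    exact hhdec ht.le (ht.trans hs).le (le_of_lt hs)
  · rw [Set.indicator_of_notMem hs]; exact zero_le

lemma aux_lb (m : Measure ℝ) (h : ℝ → ℝ≥0∞) (hhdec : AntitoneOn h (Set.Ici 0))
    (t u : ℝ) (ht : 0 < t) (htu : t < u)
    (hhrc : ContinuousWithinAt h (Set.Ici t) t)
    (c : ℝ≥0∞)
    (hpos : ∀ t' ∈ Set.Ioc t u, c < m (Set.Ioc 0 t')) :
    h t ≤ rearr m h c := by
  refine le_iInf fun E => le_iInf fun hE => le_iInf fun hEc => ?_
  have key : ∀ t' ∈ Set.Ioc t u, h t' ≤ essSup (E.indicator h) m := by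
    intro t' ht'
    by_contra hcon
    push_neg at hcon
    have hae := ae_lt_of_essSup_lt hcon
    have h0 : m (E ∩ Set.Ioc 0 t') = 0 := by
      refine measure_mono_null ?_ (MeasureTheory.ae_iff.mp hae)
      rintro y ⟨hyE, hy⟩
      simp only [Set.mem_setOf_eq, not_lt, Set.indicator_of_mem hyE]
      exact hhdec hy.1.le (ht.trans ht'.1).le hy.2
    have hlt : c < m (Set.Ioc 0 t') := hpos t' ht'
    have : m (Set.Ioc 0 t') ≤ m (Set.Ioc 0 t' ∩ E) + m (Set.Ioc 0 t' \ E) :=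
      measure_le_inter_add_diff m _ E
    rw [Set.inter_comm, h0, zero_add] at this
    exact absurd (this.trans ((measure_mono (Set.diff_subset_compl _ _)).trans hEc))
      (not_le.mpr hlt)
  have htend : Filter.Tendsto h (nhdsWithin t (Set.Ioi t)) (nhds (h t)) :=
    hhrc.mono_left (nhdsWithin_mono _ Set.Ioi_subset_Ici_self)
  refine le_of_tendsto htend ?_
  filter_upwards [Ioc_mem_nhdsGT htu] with t' ht' using key t' ht'

/-- For decreasing, right-continuous h finite on (0,∞), and x as before, for
0 < t < t_x: h(t) = μ̃_t(h, λ) = μ̃_{F(t)}(h, ν_x). -/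
theorem rearrangement_of_decreasing (x : ℝ → ℝ)
    (hpos : ∀ t : ℝ, 0 < t → 0 ≤ x t)
    (hdec : AntitoneOn x (Set.Ioi 0))
    (hrc : ∀ t : ℝ, 0 < t → ContinuousWithinAt x (Set.Ici t) t)
    (hint : MeasureTheory.IntegrableOn x (Set.Ioi 0))
    (hone : ∫ t in Set.Ioi (0:ℝ), x t = 1)
    (h : ℝ → ℝ≥0∞)
    (hhdec : AntitoneOn h (Set.Ici 0))
    (hhrc : ∀ t : ℝ, 0 ≤ t → ContinuousWithinAt h (Set.Ici t) t)
    (hhfin : ∀ t : ℝ, 0 < t → h t ≠ ⊤) :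
    ∀ t : ℝ, 0 < t →
      ENNReal.ofReal t <
        sInf {s : ℝ≥0∞ | ∃ r : ℝ, 0 < r ∧ x r = 0 ∧ s = ENNReal.ofReal r} →
      h t = rearr (MeasureTheory.volume.restrict (Set.Ioi (0:ℝ))) h (ENNReal.ofReal t) ∧
      rearr (MeasureTheory.volume.restrict (Set.Ioi (0:ℝ))) h (ENNReal.ofReal t) =
        rearr ((MeasureTheory.volume.restrict (Set.Ioi (0:ℝ))).withDensity
            (fun s => ENNReal.ofReal (x s))) h
          (ENNReal.ofReal (∫ s in Set.Ioc (0:ℝ) t, x s)) := by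
  intro t ht htx
  set m₁ : Measure ℝ := MeasureTheory.volume.restrict (Set.Ioi (0:ℝ)) with hm₁def
  set m₂ : Measure ℝ := m₁.withDensity (fun s => ENNReal.ofReal (x s)) with hm₂def
  -- find u > t with x u > 0
  obtain ⟨u, hu0, htu', huS⟩ := ENNReal.lt_iff_exists_real_btwn.mp htx
  have hupos : 0 < u := ENNReal.ofReal_pos.mp ((ENNReal.ofReal_pos.mpr ht).trans htu')
  have htu : t < u := (ENNReal.ofReal_lt_ofReal_iff hupos).mp htu'
  have hxu : 0 < x u := by
    rcases lt_or_eq_of_le (hpos u hupos) with hlt | heq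
    · exact hlt
    · have hmem : ENNReal.ofReal u ∈ {s : ℝ≥0∞ | ∃ r : ℝ, 0 < r ∧ x r = 0 ∧ s = ENNReal.ofReal r} :=
        ⟨u, hupos, heq.symm, rfl⟩
      exact absurd (csInf_le' hmem) (not_le.mpr huS)
  have xpos : ∀ s ∈ Set.Ioc (0:ℝ) u, 0 < x s := fun s hs =>
    hxu.trans_le (hdec hs.1 hupos hs.2)
  -- measure computations
  have hIoc_sub : ∀ a : ℝ, Set.Ioc (0:ℝ) a ⊆ Set.Ioi 0 := fun a => Set.Ioc_subset_Ioi_self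
  have hm1Ioc : ∀ a : ℝ, m₁ (Set.Ioc 0 a) = ENNReal.ofReal a := by
    intro a
    rw [hm₁def, Measure.restrict_apply measurableSet_Ioc,
      Set.inter_eq_left.mpr (hIoc_sub a), Real.volume_Ioc, sub_zero]
  have hm1c : m₁ (Set.Ioi t)ᶜ = ENNReal.ofReal t := by
    rw [Set.compl_Ioi, hm₁def, Measure.restrict_apply measurableSet_Iic,
      Set.Iic_inter_Ioi, Real.volume_Ioc, sub_zero]
  have hm2Ioc : ∀ a : ℝ, 0 < a → m₂ (Set.Ioc 0 a) = ENNReal.ofReal (∫ s in Set.Ioc (0:ℝ) a, x s) := by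
    intro a _
    rw [hm₂def, withDensity_apply _ measurableSet_Ioc, hm₁def,
      Measure.restrict_restrict measurableSet_Ioc, Set.inter_eq_left.mpr (hIoc_sub a)]
    rw [MeasureTheory.ofReal_integral_eq_lintegral_ofReal (hint.mono_set (hIoc_sub a))]
    filter_upwards [ae_restrict_mem measurableSet_Ioc] with s hs using hpos s hs.1
  have hm2c : m₂ (Set.Ioi t)ᶜ = ENNReal.ofReal (∫ s in Set.Ioc (0:ℝ) t, x s) := by
    rw [Set.compl_Ioi, hm₂def, withDensity_apply _ measurableSet_Iic, hm₁def,
      Measure.restrict_restrict measurableSet_Iic, Set.Iic_inter_Ioi]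
    rw [MeasureTheory.ofReal_integral_eq_lintegral_ofReal (hint.mono_set (hIoc_sub t))]
    filter_upwards [ae_restrict_mem measurableSet_Ioc] with s hs using hpos s hs.1
  -- strict monotonicity of F
  have hFnn : (0:ℝ) ≤ ∫ s in Set.Ioc (0:ℝ) t, x s :=
    setIntegral_nonneg measurableSet_Ioc fun s hs => hpos s hs.1
  have hFlt : ∀ t' ∈ Set.Ioc t u,
      (∫ s in Set.Ioc (0:ℝ) t, x s) < ∫ s in Set.Ioc (0:ℝ) t', x s := by
    intro t' ht'
    have hsub2 : Set.Ioc t t' ⊆ Set.Ioi (0:ℝ) := fun s hs => ht.trans hs.1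
    have int1 : IntegrableOn x (Set.Ioc 0 t) := hint.mono_set (hIoc_sub t)
    have int2 : IntegrableOn x (Set.Ioc t t') := hint.mono_set hsub2
    have hsplit : (∫ s in Set.Ioc (0:ℝ) t', x s) =
        (∫ s in Set.Ioc (0:ℝ) t, x s) + ∫ s in Set.Ioc t t', x s := by
      rw [← setIntegral_union (Set.Ioc_disjoint_Ioc_of_le le_rfl) measurableSet_Ioc int1 int2,
        Set.Ioc_union_Ioc_eq_Ioc ht.le ht'.1.le]
    have hconst : (t' - t) * x t' ≤ ∫ s in Set.Ioc t t', x s := by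
      have := setIntegral_mono_on
        (integrableOn_const (by rw [Real.volume_Ioc]; exact ENNReal.ofReal_ne_top))
        int2 measurableSet_Ioc
        (fun s hs => hdec (hsub2 hs) (ht.trans ht'.1) hs.2)
      rw [setIntegral_const, Real.volume_real_Ioc_of_le ht'.1.le,
        smul_eq_mul] at this
      exact this
    have hpos' : 0 < (t' - t) * x t' :=
      mul_pos (sub_pos.mpr ht'.1) (xpos t' ⟨ht.trans ht'.1, ht'.2⟩)
    linarith [hsplit, hconst, hpos']
  -- part 1
  have h1 : h t = rearr m₁ h (ENNReal.ofReal t) := by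
    refine le_antisymm ?_ (aux_ub m₁ h hhdec t ht _ hm1c.le)
    refine aux_lb m₁ h hhdec t u ht htu (hhrc t ht.le) _ ?_
    intro t' ht'
    rw [hm1Ioc t']
    exact (ENNReal.ofReal_lt_ofReal_iff (ht.trans ht'.1)).mpr ht'.1
  have h2 : h t = rearr m₂ h (ENNReal.ofReal (∫ s in Set.Ioc (0:ℝ) t, x s)) := by
    refine le_antisymm ?_ (aux_ub m₂ h hhdec t ht _ hm2c.le)
    refine aux_lb m₂ h hhdec t u ht htu (hhrc t ht.le) _ ?_
    intro t' ht'
    rw [hm2Ioc t' (ht.trans ht'.1)]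
    exact (ENNReal.ofReal_lt_ofReal_iff_of_nonneg hFnn).mpr (hFlt t' ht')
  exact ⟨h1, h1.symm.trans h2⟩
end

section
/- Let h : [0, ∞) → [0, ∞] be a decreasing, right-continuous function and let t > 0. Then inf{‖h·χ_E‖_∞ : E ⊆ [0,∞) measurable, λ(Eᶜ) ≤ t} = h(t), where λ is Lebesgue measure and ‖·‖_∞ is the λ-essential supremum. -/
open MeasureTheory
open scoped ENNReal NNReal

/-- For decreasing, right-continuous h : [0,∞) → [0,∞] and t > 0:
inf {‖h·χ_E‖_∞ : λ(Eᶜ) ≤ t} = h(t). -/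
theorem rearrangement_eq_self (h : ℝ → ℝ≥0∞)
    (hdec : AntitoneOn h (Set.Ici 0))
    (hrc : ∀ t : ℝ, 0 ≤ t → ContinuousWithinAt h (Set.Ici t) t) :
    ∀ t : ℝ, 0 < t →
      (⨅ (E : Set ℝ) (_ : MeasurableSet E)
        (_ : (MeasureTheory.volume.restrict (Set.Ici (0:ℝ))) Eᶜ ≤ ENNReal.ofReal t),
        essSup (E.indicator h) (MeasureTheory.volume.restrict (Set.Ici (0:ℝ)))) = h t := by
  intro t ht
  set μ := MeasureTheory.volume.restrict (Set.Ici (0:ℝ)) with hμ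
  apply le_antisymm
  · -- take E = Ici t
    have hcompl : μ (Set.Ici t)ᶜ ≤ ENNReal.ofReal t := by
      rw [Set.compl_Ici, hμ, Measure.restrict_apply measurableSet_Iio]
      have : Set.Iio t ∩ Set.Ici 0 = Set.Ico 0 t := by
        ext x; simp [Set.mem_Ico, and_comm]
      rw [this, Real.volume_Ico, sub_zero]
    calc (⨅ (E : Set ℝ) (_ : MeasurableSet E) (_ : μ Eᶜ ≤ ENNReal.ofReal t),
          essSup (E.indicator h) μ)
        ≤ essSup ((Set.Ici t).indicator h) μ := by
          refine iInf_le_of_le (Set.Ici t) ?_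
          refine iInf_le_of_le measurableSet_Ici ?_
          exact iInf_le _ hcompl
      _ ≤ h t := by
          refine essSup_le_of_ae_le _ (Filter.Eventually.of_forall fun x => ?_)
          by_cases hx : x ∈ Set.Ici t
          · rw [Set.indicator_of_mem hx]
            exact hdec ht.le (le_trans ht.le hx) hx
          · rw [Set.indicator_of_notMem hx]; exact zero_le
  · refine le_iInf fun E => le_iInf fun hE => le_iInf fun hEc => ?_
    -- for each s > t, h s ≤ essSup
    have key : ∀ s : ℝ, t < s → h s ≤ essSup (E.indicator h) μ := by
      intro s hs
      by_contra hlt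
      push_neg at hlt
      have hae := ae_le_essSup (f := E.indicator h) (μ := μ)
      have hnull : μ {x | h s ≤ E.indicator h x} = 0 := by
        have hev : ∀ᵐ x ∂μ, ¬ (h s ≤ E.indicator h x) :=
          hae.mono fun x hx hc => absurd (le_trans hc hx) (not_le.mpr hlt)
        simpa [not_not] using MeasureTheory.ae_iff.mp hev
      have hsub : E ∩ Set.Icc 0 s ⊆ {x | h s ≤ E.indicator h x} := by
        rintro x ⟨hxE, hx0, hxs⟩
        rw [Set.mem_setOf_eq, Set.indicator_of_mem hxE]
        exact hdec hx0 (le_trans hx0 hxs) hxs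
      have h1 : μ (E ∩ Set.Icc 0 s) = 0 :=
        measure_mono_null hsub hnull
      have h2 : μ (Set.Icc 0 s) ≤ μ (E ∩ Set.Icc 0 s) + μ Eᶜ := by
        refine le_trans (measure_mono ?_) (measure_union_le _ _)
        intro x hx
        by_cases hxE : x ∈ E
        · exact Or.inl ⟨hxE, hx⟩
        · exact Or.inr hxE
      have h3 : μ (Set.Icc 0 s) = ENNReal.ofReal s := by
        rw [hμ, Measure.restrict_apply measurableSet_Icc,
          Set.inter_eq_left.mpr (fun x hx => hx.1), Real.volume_Icc, sub_zero]
      rw [h3, h1, zero_add] at h2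
      have := le_trans h2 hEc
      rw [ENNReal.ofReal_le_ofReal_iff ht.le] at this
      exact absurd this (not_le.mpr hs)
    -- take limit s → t⁺
    have htend : Filter.Tendsto h (nhdsWithin t (Set.Ioi t)) (nhds (h t)) :=
      (hrc t ht.le).tendsto.mono_left (nhdsWithin_mono t Set.Ioi_subset_Ici_self)
    refine le_of_tendsto htend ?_
    filter_upwards [self_mem_nhdsWithin] with s hs
    exact key s hs
end
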